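/- Let R be a commutative ring with unity, G = ⟨x | x^n = 1⟩ a cyclic group of order n ≥ 1, σ, τ R-algebra endomorphisms of RG, and D : RG → RG a (σ,τ)-derivation. Then D is inner if and only if there exists some β ∈ RG such that D(x) = β(τ(x) − σ(x)). -/

import Mathlib

/-- The generator `x` of the cyclic group of order `n`, viewed inside the group ring
`R[Multiplicative (ZMod n)]`. -/
noncomputable def xgen (R : Type*) [CommRing R] (n : ℕ) :
    MonoidAlgebra R (Multiplicative (ZMod n)) :=
  MonoidAlgebra.of R (Multiplicative (ZMod n)) (Multiplicative.ofAdd (1 : ZMod n))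

/-- A `(σ,τ)`-derivation `D` of the group ring of the cyclic group
`⟨x | x^n = 1⟩` is inner iff there exists `β` with `D x = β (τ x − σ x)`. -/
theorem stmt4 {R : Type*} [CommRing R] (n : ℕ) [NeZero n]
    (σ τ : MonoidAlgebra R (Multiplicative (ZMod n)) →ₐ[R] MonoidAlgebra R (Multiplicative (ZMod n)))
    (D : MonoidAlgebra R (Multiplicative (ZMod n)) →ₗ[R] MonoidAlgebra R (Multiplicative (ZMod n)))
    (hD : ∀ a b, D (a * b) = D a * τ b + σ a * D b) :
    (∃ β, ∀ a, D a = β * (τ a - σ a)) ↔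
    (∃ β, D (xgen R n) = β * (τ (xgen R n) - σ (xgen R n))) := by
  constructor
  · rintro ⟨β, h⟩
    exact ⟨β, h _⟩
  · rintro ⟨β, hβ⟩
    refine ⟨β, ?_⟩
    have h1 : D 1 = 0 := by
      have h := hD 1 1
      simp only [mul_one, map_one, one_mul] at h
      exact (right_eq_add.mp h)
    have hpow : ∀ k : ℕ, D (xgen R n ^ k) = β * (τ (xgen R n ^ k) - σ (xgen R n ^ k)) := by
      intro k
      induction k with
      | zero => simp [h1]
      | succ k ih =>
        rw [pow_succ, hD, ih, hβ, map_mul, map_mul]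
        ring
    have hof : ∀ g : Multiplicative (ZMod n),
        D (MonoidAlgebra.of R (Multiplicative (ZMod n)) g) =
          β * (τ (MonoidAlgebra.of R (Multiplicative (ZMod n)) g) -
            σ (MonoidAlgebra.of R (Multiplicative (ZMod n)) g)) := by
      intro g
      have hg : MonoidAlgebra.of R (Multiplicative (ZMod n)) g =
          xgen R n ^ (Multiplicative.toAdd g).val := by
        rw [xgen, ← map_pow]
        congr 1
        rw [← ofAdd_nsmul, nsmul_eq_mul, mul_one, ZMod.natCast_val, ZMod.cast_id,
          ofAdd_toAdd]
      rw [hg, hpow]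
    intro a
    induction a using MonoidAlgebra.induction_on with
    | of g => exact hof g
    | add f g hf hg => simp [map_add, hf, hg]; ring
    | smul r f hf => rw [map_smul, map_smul, map_smul, hf, ← smul_sub, mul_smul_comm]
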